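/- Let k, k', p, p' ∈ ℕ with p, p' ≥ 1, and let M_k^p and M_{k'}^{p'} be as above (M_k = I + E with E[1,2]=1, E[1,3]=k+1, E[3,4]=1). If there exists P ∈ GL(4, ℤ) with M_k^p · P = P · M_{k'}^{p'}, then k = k' and p = p'. -/

import Mathlib

namespace Stmt9

/-- The nilpotent matrix E with E[1,2]=1, E[1,3]=k+1, E[3,4]=1 (1-based indices). -/
def E (k : ℕ) : Matrix (Fin 4) (Fin 4) ℤ :=
  !![0, 1, (k : ℤ) + 1, 0;
     0, 0, 0,           0;
     0, 0, 0,           1;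
     0, 0, 0,           0]

/-- M_k = I + E. -/
def M (k : ℕ) : Matrix (Fin 4) (Fin 4) ℤ := 1 + E k

/-- c p = p(p-1)/2, defined recursively to avoid division. -/
def c : ℕ → ℤ
  | 0 => 0
  | n + 1 => c n + n

lemma Mpow (k p : ℕ) : M k ^ p =
    !![1, (p:ℤ), (p:ℤ)*(k+1), c p*(k+1);
       0, 1, 0, 0;
       0, 0, 1, (p:ℤ);
       0, 0, 0, 1] := by
  induction p with
  | zero =>
    ext i j
    fin_cases i <;> fin_cases j <;> simp [c, Matrix.one_apply, Matrix.vecHead, Matrix.vecTail]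
  | succ n ih =>
    rw [pow_succ, ih]
    ext i j
    fin_cases i <;> fin_cases j <;>
      simp [M, E, c, Matrix.mul_apply, Fin.sum_univ_four, Matrix.one_apply,
        Matrix.vecHead, Matrix.vecTail] <;> push_cast <;> ring

/-- If some P ∈ GL(4,ℤ) intertwines M_k^p and M_{k'}^{p'}, then k = k' and p = p'. -/
theorem stmt_9 (k k' p p' : ℕ) (hp : 1 ≤ p) (hp' : 1 ≤ p')
    (P : Matrix (Fin 4) (Fin 4) ℤ) (hP : IsUnit P)
    (h : M k ^ p * P = P * M k' ^ p') :
    k = k' ∧ p = p' := by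
  rw [Mpow, Mpow] at h
  have hp0 : (p:ℤ) ≠ 0 := by positivity
  have hp'0 : p' ≠ 0 := by omega
  have he : ∀ i j, (!![1, (p:ℤ), (p:ℤ)*(k+1), c p*(k+1); 0,1,0,0; 0,0,1,(p:ℤ); 0,0,0,1] * P) i j
      = (P * !![1, (p':ℤ), (p':ℤ)*(k'+1), c p'*(k'+1); 0,1,0,0; 0,0,1,(p':ℤ); 0,0,0,1]) i j := by
    intro i j; rw [h]
  have h11 := he 1 1
  have h31 := he 3 1
  have h22 := he 2 2
  have h33 := he 3 3
  have h13 := he 1 3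
  have h21 := he 2 1
  have h23 := he 2 3
  have h02 := he 0 2
  simp [Matrix.mul_apply, Fin.sum_univ_four, Matrix.vecHead, Matrix.vecTail]
    at h11 h31 h22 h33 h13 h21 h23 h02
  -- zeros in the lower-left part of P
  have z10 : P 1 0 = 0 := h11.resolve_right hp'0
  have z30 : P 3 0 = 0 := h31.resolve_right hp'0
  have z32 : P 3 2 = 0 := by
    rw [z30] at h33
    have : (p':ℤ) ≠ 0 := by exact_mod_cast hp'0
    simpa [this, hp'0] using h33
  have z20 : P 2 0 = 0 := by
    rw [z32] at h22
    have hne : (p':ℤ) * ((k':ℤ)+1) ≠ 0 := by positivity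
    have : P 2 0 * ((p':ℤ) * ((k':ℤ)+1)) = 0 := by linarith
    exact (mul_eq_zero.mp this).resolve_right hne
  have z31 : P 3 1 = 0 := by
    rw [z20] at h21
    have : (p:ℤ) * P 3 1 = 0 := by linarith
    exact (mul_eq_zero.mp this).resolve_left hp0
  have z12 : P 1 2 = 0 := by
    rw [z10] at h13
    have : (p':ℤ) ≠ 0 := by exact_mod_cast hp'0
    have h' : P 1 2 * (p':ℤ) = 0 := by linarith
    exact (mul_eq_zero.mp h').resolve_right this
  -- determinant is a product of the diagonal entries
  have hdet : P.det = P 0 0 * P 1 1 * P 2 2 * P 3 3 := by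
    simp [Matrix.det_succ_row_zero, Fin.sum_univ_succ, Fin.succAbove, show (Fin.succ 2 : Fin 4) = 3 from rfl, show ((2:Fin 3).castSucc : Fin 4) = 2 from rfl, z10, z30, z32, z20, z31, z12]
    ring
  have hu : IsUnit (P 0 0 * P 1 1 * P 2 2 * P 3 3) := by
    rw [← hdet]; exact (Matrix.isUnit_iff_isUnit_det P).mp hP
  have u33 : IsUnit (P 3 3) := isUnit_of_mul_isUnit_right hu
  have u22 : IsUnit (P 2 2) := isUnit_of_mul_isUnit_right (isUnit_of_mul_isUnit_left hu)
  have u00 : IsUnit (P 0 0) :=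
    isUnit_of_mul_isUnit_left (isUnit_of_mul_isUnit_left (isUnit_of_mul_isUnit_left hu))
  have s33 := Int.isUnit_iff.mp u33
  have s22 := Int.isUnit_iff.mp u22
  have s00 := Int.isUnit_iff.mp u00
  -- key equations
  have e1 : (p:ℤ) * P 3 3 = P 2 2 * p' := by rw [z20] at h23; linarith
  have e2 : (p:ℤ) * ((k:ℤ)+1) * P 2 2 = P 0 0 * ((p':ℤ) * ((k':ℤ)+1)) := by
    rw [z12, z32] at h02; linarith
  have hpp : p = p' := by
    rcases s22 with h2 | h2 <;> rcases s33 with h3 | h3 <;> rw [h2, h3] at e1 <;>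
      simp at e1 <;> omega
  subst hpp
  refine ⟨?_, rfl⟩
  have e3 : ((k:ℤ)+1) * P 2 2 = ((k':ℤ)+1) * P 0 0 := by
    have : (p:ℤ) * (((k:ℤ)+1) * P 2 2) = (p:ℤ) * (((k':ℤ)+1) * P 0 0) := by
      linear_combination e2
    exact mul_left_cancel₀ hp0 this
  rcases s22 with h2 | h2 <;> rcases s00 with h0 | h0 <;> rw [h2, h0] at e3 <;>
    simp at e3 <;> omega

end Stmt9
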